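/- arXiv:2103.05566 — 5 statements merged into one kernel-verified Lean document; each statement's English description precedes it below -/
import Mathlib

section
/- Let H : ℝ² → ℝ be C² and h ∈ ℝ. Suppose Q, P : ℝ² → ℝ are differentiable and satisfy the symplectic Euler scheme equations Q(q,p) = q + h·∂H/∂p(Q(q,p), p) and P(q,p) = p − h·∂H/∂q(Q(q,p), p) for all (q,p). Then at every point (q,p) where 1 − h·∂²H/∂q∂p(Q(q,p), p) ≠ 0, the Jacobian determinant of the map (q,p) ↦ (Q(q,p), P(q,p)) equals 1; i.e., the symplectic Euler scheme preserves the canonical two-form dq ∧ dp. -/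
noncomputable section

/-- `∂H/∂q` at a point of the plane. -/
def Hq (H : ℝ × ℝ → ℝ) (z : ℝ × ℝ) : ℝ := fderiv ℝ H z (1, 0)

/-- `∂H/∂p` at a point of the plane. -/
def Hp (H : ℝ × ℝ → ℝ) (z : ℝ × ℝ) : ℝ := fderiv ℝ H z (0, 1)

/-- `∂²H/∂q∂p` at a point of the plane. -/
def Hqp (H : ℝ × ℝ → ℝ) (z : ℝ × ℝ) : ℝ :=
  fderiv ℝ (fun w => fderiv ℝ H w (0, 1)) z (1, 0)

/-- The Jacobian determinant of the map `(q,p) ↦ (Q(q,p), P(q,p))`. -/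
def jacDet (Q P : ℝ × ℝ → ℝ) (z : ℝ × ℝ) : ℝ :=
  fderiv ℝ Q z (1, 0) * fderiv ℝ P z (0, 1) - fderiv ℝ Q z (0, 1) * fderiv ℝ P z (1, 0)

open ContinuousLinearMap in
theorem symplectic_euler_preserves_canonical_two_form
    (H : ℝ × ℝ → ℝ) (hH : ContDiff ℝ 2 H) (h : ℝ)
    (Q P : ℝ × ℝ → ℝ) (hQd : Differentiable ℝ Q) (hPd : Differentiable ℝ P)
    (hQ : ∀ z : ℝ × ℝ, Q z = z.1 + h * Hp H (Q z, z.2))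
    (hP : ∀ z : ℝ × ℝ, P z = z.2 - h * Hq H (Q z, z.2)) :
    ∀ z : ℝ × ℝ, 1 - h * Hqp H (Q z, z.2) ≠ 0 → jacDet Q P z = 1 := by
  intro z _
  have hHd : Differentiable ℝ H := hH.differentiable (by norm_num)
  have hH1 : ContDiff ℝ 1 (fderiv ℝ H) := hH.fderiv_right (by norm_num)
  have hH' : Differentiable ℝ (fderiv ℝ H) := hH1.differentiable one_ne_zero
  set y : ℝ × ℝ := (Q z, z.2) with hy
  set D2 : ℝ × ℝ →L[ℝ] ℝ × ℝ →L[ℝ] ℝ := fderiv ℝ (fderiv ℝ H) y with hD2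
  have hsymm : D2 (0, 1) (1, 0) = D2 (1, 0) (0, 1) :=
    second_derivative_symmetric (fun x => (hHd x).hasFDerivAt) ((hH' y).hasFDerivAt) _ _
  -- derivative of the map w ↦ (Q w, w.2)
  set A : ℝ × ℝ →L[ℝ] ℝ × ℝ := (fderiv ℝ Q z).prod (ContinuousLinearMap.snd ℝ ℝ ℝ) with hA
  have hA' : HasFDerivAt (fun w : ℝ × ℝ => (Q w, w.2)) A z :=
    HasFDerivAt.prodMk ((hQd z).hasFDerivAt) (hasFDerivAt_snd)
  -- derivatives of w ↦ ∂H/∂p (w) and w ↦ ∂H/∂q (w) at y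
  have hFy : HasFDerivAt (fun w : ℝ × ℝ => fderiv ℝ H w (0, 1)) (D2.flip (0, 1)) y := by
    have := ((hH' y).hasFDerivAt).clm_apply (hasFDerivAt_const (((0 : ℝ), (1 : ℝ))) y)
    simpa using this
  have hKy : HasFDerivAt (fun w : ℝ × ℝ => fderiv ℝ H w (1, 0)) (D2.flip (1, 0)) y := by
    have := ((hH' y).hasFDerivAt).clm_apply (hasFDerivAt_const (((1 : ℝ), (0 : ℝ))) y)
    simpa using this
  -- the derivative of Q
  have hQe : Q = fun w : ℝ × ℝ => w.1 + h * fderiv ℝ H (Q w, w.2) (0, 1) := funext hQ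
  have hQz : fderiv ℝ Q z
      = ContinuousLinearMap.fst ℝ ℝ ℝ + h • ((D2.flip (0, 1)).comp A) := by
    have hcomp : HasFDerivAt (fun w : ℝ × ℝ => fderiv ℝ H (Q w, w.2) (0, 1))
        ((D2.flip (0, 1)).comp A) z := by have := HasFDerivAt.comp z hFy hA'; exact this
    have : HasFDerivAt Q
        (ContinuousLinearMap.fst ℝ ℝ ℝ + h • ((D2.flip (0, 1)).comp A)) z := by
      rw [hQe]
      exact (hasFDerivAt_fst).add (hcomp.const_mul h)
    exact this.fderiv
  -- the derivative of P
  have hPe : P = fun w : ℝ × ℝ => w.2 - h * fderiv ℝ H (Q w, w.2) (1, 0) := funext hP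
  have hPz : fderiv ℝ P z
      = ContinuousLinearMap.snd ℝ ℝ ℝ - h • ((D2.flip (1, 0)).comp A) := by
    have hcomp : HasFDerivAt (fun w : ℝ × ℝ => fderiv ℝ H (Q w, w.2) (1, 0))
        ((D2.flip (1, 0)).comp A) z := by have := HasFDerivAt.comp z hKy hA'; exact this
    have : HasFDerivAt P
        (ContinuousLinearMap.snd ℝ ℝ ℝ - h • ((D2.flip (1, 0)).comp A)) z := by
      rw [hPe]
      exact (hasFDerivAt_snd).sub (hcomp.const_mul h)
    exact this.fderiv
  -- expand D2 on a basis
  have hbasis : ∀ v w : ℝ × ℝ, D2 v w = v.1 * D2 (1, 0) w + v.2 * D2 (0, 1) w := by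
    intro v w
    have hv : v = v.1 • ((1 : ℝ), (0 : ℝ)) + v.2 • ((0 : ℝ), (1 : ℝ)) := by
      ext <;> simp
    rw [hv, map_add, map_smul, map_smul]
    simp
  set a := fderiv ℝ Q z (1, 0) with ha
  set b := fderiv ℝ Q z (0, 1) with hb
  set α := D2 (1, 0) (0, 1) with hα
  set β := D2 (0, 1) (0, 1) with hβ
  set γ := D2 (1, 0) (1, 0) with hγ
  have hA1 : A (1, 0) = (a, 0) := by rw [hA]; simp [← ha]
  have hA2 : A (0, 1) = (b, 1) := by rw [hA]; simp [← hb]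
  -- scalar equations
  have e1 : a = 1 + h * (a * α) := by
    conv_lhs => rw [ha, hQz]
    simp only [ContinuousLinearMap.add_apply, ContinuousLinearMap.coe_smul',
      Pi.smul_apply, ContinuousLinearMap.comp_apply, ContinuousLinearMap.flip_apply,
      ContinuousLinearMap.prod_apply, ContinuousLinearMap.coe_fst',
      ContinuousLinearMap.coe_snd']
    rw [hbasis]
    simp [smul_eq_mul, hA1, ← hα]
  have e2 : fderiv ℝ P z (1, 0) = -(h * (a * γ)) := by
    rw [hPz]
    simp only [ContinuousLinearMap.sub_apply, ContinuousLinearMap.coe_smul',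
      Pi.smul_apply, ContinuousLinearMap.comp_apply, ContinuousLinearMap.flip_apply,
      ContinuousLinearMap.prod_apply, ContinuousLinearMap.coe_fst',
      ContinuousLinearMap.coe_snd']
    rw [hbasis]
    simp [smul_eq_mul, hA1, ← hγ]
  have e3 : fderiv ℝ P z (0, 1) = 1 - h * (b * γ + α) := by
    rw [hPz]
    simp only [ContinuousLinearMap.sub_apply, ContinuousLinearMap.coe_smul',
      Pi.smul_apply, ContinuousLinearMap.comp_apply, ContinuousLinearMap.flip_apply,
      ContinuousLinearMap.prod_apply, ContinuousLinearMap.coe_fst',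
      ContinuousLinearMap.coe_snd']
    rw [hbasis]
    simp [smul_eq_mul, hA2, ← hγ, hsymm, ← hα]
  rw [jacDet, ← ha, ← hb, e2, e3]
  linear_combination e1
end
end

section
/- Let H : ℝ² → ℝ be C² and h ∈ ℝ. Suppose Q, P : ℝ² → ℝ are differentiable and satisfy the modified symplectic Euler scheme equations Q(q,p) = q + h·∂H/∂p(q,p) and P(q,p) = p − h·∂H/∂q(Q(q,p), P(q,p)) for all (q,p). Then at every point (q,p) where 1 + h·∂²H/∂q∂p(Q(q,p), P(q,p)) ≠ 0, one has (1 + h·∂²H/∂q∂p(Q(q,p),P(q,p)))·det D(Q,P)(q,p) = 1 + h·∂²H/∂q∂p(q,p), where det D(Q,P) is the Jacobian determinant of (q,p) ↦ (Q,P); i.e., the scheme preserves the h-dependent two-form (1 + h·∂²H/∂q∂p(q,p)) dq ∧ dp. -/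
noncomputable section

theorem modified_symplectic_euler_preserves_two_form
    (H : ℝ × ℝ → ℝ) (hH : ContDiff ℝ 2 H) (h : ℝ)
    (Q P : ℝ × ℝ → ℝ) (hQd : Differentiable ℝ Q) (hPd : Differentiable ℝ P)
    (hQ : ∀ z : ℝ × ℝ, Q z = z.1 + h * Hp H z)
    (hP : ∀ z : ℝ × ℝ, P z = z.2 - h * Hq H (Q z, P z)) :
    ∀ z : ℝ × ℝ, 1 + h * Hqp H (Q z, P z) ≠ 0 →
      (1 + h * Hqp H (Q z, P z)) * jacDet Q P z = 1 + h * Hqp H z := by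
  intro z hne
  set g : ℝ × ℝ → (ℝ × ℝ) →L[ℝ] ℝ := fderiv ℝ H with hg_def
  have hHd : Differentiable ℝ H := hH.differentiable (by norm_num)
  have hgc : ContDiff ℝ 1 g := hH.fderiv_right (by norm_num)
  have hgd : Differentiable ℝ g := hgc.differentiable one_ne_zero
  set A : (ℝ × ℝ) →L[ℝ] (ℝ × ℝ) →L[ℝ] ℝ := fderiv ℝ g z with hA_def
  set w : ℝ × ℝ := (Q z, P z) with hw_def
  set B : (ℝ × ℝ) →L[ℝ] (ℝ × ℝ) →L[ℝ] ℝ := fderiv ℝ g w with hB_def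
  -- symmetry of second derivative
  have hsym : ∀ z' : ℝ × ℝ, ∀ v u : ℝ × ℝ,
      (fderiv ℝ g z') v u = (fderiv ℝ g z') u v := by
    intro z' v u
    exact second_derivative_symmetric (fun y => (hHd y).hasFDerivAt)
      ((hgd z').hasFDerivAt) v u
  -- derivative of Q
  have hQeq : Q = fun z : ℝ × ℝ => z.1 + h * g z (0, 1) := by
    funext z'; rw [hQ z']; rfl
  have hQz : ∀ v : ℝ × ℝ, fderiv ℝ Q z v = v.1 + h * A v (0, 1) := by
    have hder : HasFDerivAt Q
        ((ContinuousLinearMap.fst ℝ ℝ ℝ) +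
          h • ((g z).comp (0 : (ℝ × ℝ) →L[ℝ] ℝ × ℝ) + A.flip (0, 1))) z := by
      rw [hQeq]
      exact (hasFDerivAt_fst).add
        (((hgd z).hasFDerivAt.clm_apply (hasFDerivAt_const _ _)).const_mul h)
    intro v
    rw [hder.fderiv]
    simp
  -- derivative of P
  have hFd : HasFDerivAt (fun z : ℝ × ℝ => (Q z, P z))
      ((fderiv ℝ Q z).prod (fderiv ℝ P z)) z :=
    HasFDerivAt.prodMk (hQd z).hasFDerivAt (hPd z).hasFDerivAt
  have hPeq : P = fun z' : ℝ × ℝ => z'.2 - h * g (Q z', P z') (1, 0) := by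
    funext z'; exact hP z'
  have hgF : HasFDerivAt (fun z' : ℝ × ℝ => g (Q z', P z'))
      (B.comp ((fderiv ℝ Q z).prod (fderiv ℝ P z))) z :=
    (hgd w).hasFDerivAt.comp z hFd
  have hPz : ∀ v : ℝ × ℝ, fderiv ℝ P z v =
      v.2 - h * B (fderiv ℝ Q z v, fderiv ℝ P z v) (1, 0) := by
    have hder0 : HasFDerivAt (fun z' : ℝ × ℝ => z'.2 - h * g (Q z', P z') (1, 0))
        ((ContinuousLinearMap.snd ℝ ℝ ℝ) -
          h • ((g w).comp (0 : (ℝ × ℝ) →L[ℝ] ℝ × ℝ) +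
            (B.comp ((fderiv ℝ Q z).prod (fderiv ℝ P z))).flip (1, 0))) z :=
      (hasFDerivAt_snd).sub
        ((hgF.clm_apply (hasFDerivAt_const _ _)).const_mul h)
    have h1 : fderiv ℝ P z
        = fderiv ℝ (fun z' : ℝ × ℝ => z'.2 - h * g (Q z', P z') (1, 0)) z :=
      congrArg (fun f => fderiv ℝ f z) hPeq
    intro v
    conv_lhs => rw [h1]
    rw [hder0.fderiv]
    simp
  -- abbreviations for entries
  set Qq := fderiv ℝ Q z (1, 0) with hQq
  set Qp := fderiv ℝ Q z (0, 1) with hQp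
  set Pq := fderiv ℝ P z (1, 0) with hPq
  set Pp := fderiv ℝ P z (0, 1) with hPp
  have hexp : ∀ x y : ℝ, B (x, y) (1, 0) = x * B (1, 0) (1, 0) + y * B (1, 0) (0, 1) := by
    intro x y
    have : (x, y) = x • ((1 : ℝ), (0 : ℝ)) + y • ((0 : ℝ), (1 : ℝ)) := by
      simp [Prod.ext_iff]
    rw [this]
    rw [map_add, map_smul, map_smul]
    have hs := hsym w (0, 1) (1, 0)
    rw [hB_def] at *
    simp [hs]
  have hHqpw : Hqp H w = B (1, 0) (0, 1) := by
    have hder : HasFDerivAt (fun z' : ℝ × ℝ => g z' ((0 : ℝ), (1 : ℝ)))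
        ((g w).comp (0 : (ℝ × ℝ) →L[ℝ] ℝ × ℝ) + B.flip (0, 1)) w :=
      (hgd w).hasFDerivAt.clm_apply (hasFDerivAt_const _ _)
    rw [Hqp, hder.fderiv]
    simp
  have hHqpz : Hqp H z = A (1, 0) (0, 1) := by
    have hder : HasFDerivAt (fun z' : ℝ × ℝ => g z' ((0 : ℝ), (1 : ℝ)))
        ((g z).comp (0 : (ℝ × ℝ) →L[ℝ] ℝ × ℝ) + A.flip (0, 1)) z :=
      (hgd z).hasFDerivAt.clm_apply (hasFDerivAt_const _ _)
    rw [Hqp, hder.fderiv]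
    simp
  set b := B (1, 0) (1, 0) with hb
  set c := B (1, 0) (0, 1) with hc
  have eq1 : Pq = - h * (Qq * b + Pq * c) := by
    have := hPz (1, 0)
    rw [hexp] at this
    norm_num at this
    linarith [this]
  have eq2 : Pp = 1 - h * (Qp * b + Pp * c) := by
    have := hPz (0, 1)
    rw [hexp] at this
    norm_num at this
    linarith [this]
  have hQqval : Qq = 1 + h * Hqp H z := by
    rw [hQq, hQz, hHqpz]
  rw [jacDet, ← hQq, ← hQp, ← hPq, ← hPp, hHqpw, ← hQqval]
  linear_combination Qq * eq2 - Qp * eq1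
end
end

section
/- Let H : ℝ² → ℝ be C² and h ∈ ℝ. Suppose Q, P : ℝ² → ℝ are differentiable and satisfy the adjoint modified symplectic Euler scheme equations P(q,p) = p − h·∂H/∂q(q,p) and Q(q,p) = q + h·∂H/∂p(Q(q,p), P(q,p)) for all (q,p). Then at every point (q,p) where 1 − h·∂²H/∂q∂p(Q(q,p), P(q,p)) ≠ 0, one has (1 − h·∂²H/∂q∂p(Q(q,p),P(q,p)))·det D(Q,P)(q,p) = 1 − h·∂²H/∂q∂p(q,p); i.e., the adjoint scheme preserves the h-dependent two-form (1 − h·∂²H/∂q∂p(q,p)) dq ∧ dp. -/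
noncomputable section

lemma fderiv_fderiv_apply {H : ℝ × ℝ → ℝ} (hH : ContDiff ℝ 2 H) (z v u : ℝ × ℝ) :
    fderiv ℝ (fun w => fderiv ℝ H w v) z u = fderiv ℝ (fderiv ℝ H) z u v := by
  have hF : DifferentiableAt ℝ (fderiv ℝ H) z :=
    ((hH.fderiv_right (m := 1) (by norm_num)).differentiable one_ne_zero) z
  rw [fderiv_clm_apply hF (differentiableAt_const v)]
  simp

lemma swap_second {H : ℝ × ℝ → ℝ} (hH : ContDiff ℝ 2 H) (z : ℝ × ℝ) :
    fderiv ℝ (fun w => fderiv ℝ H w (1, 0)) z (0, 1) = Hqp H z := by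
  rw [fderiv_fderiv_apply hH, Hqp, fderiv_fderiv_apply hH]
  exact (hH.contDiffAt.isSymmSndFDerivAt (by simp [minSmoothness_of_isRCLikeNormedField])) _ _

lemma expand_lin (L : ℝ × ℝ →L[ℝ] ℝ) (x y : ℝ) :
    L (x, y) = x * L (1, 0) + y * L (0, 1) := by
  have hxy : (x, y) = x • ((1 : ℝ), (0 : ℝ)) + y • ((0 : ℝ), (1 : ℝ)) := by simp
  rw [hxy, L.map_add, L.map_smul, L.map_smul]
  simp [smul_eq_mul]

theorem adjoint_modified_symplectic_euler_preserves_two_form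
    (H : ℝ × ℝ → ℝ) (hH : ContDiff ℝ 2 H) (h : ℝ)
    (Q P : ℝ × ℝ → ℝ) (hQd : Differentiable ℝ Q) (hPd : Differentiable ℝ P)
    (hP : ∀ z : ℝ × ℝ, P z = z.2 - h * Hq H z)
    (hQ : ∀ z : ℝ × ℝ, Q z = z.1 + h * Hp H (Q z, P z)) :
    ∀ z : ℝ × ℝ, 1 - h * Hqp H (Q z, P z) ≠ 0 →
      (1 - h * Hqp H (Q z, P z)) * jacDet Q P z = 1 - h * Hqp H z := by
  intro z hz
  have hFd : Differentiable ℝ (fderiv ℝ H) :=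
    (hH.fderiv_right (m := 1) (by norm_num)).differentiable one_ne_zero
  have hHqd : Differentiable ℝ (fun w => fderiv ℝ H w ((1 : ℝ), (0 : ℝ))) :=
    fun x => (hFd x).clm_apply (differentiableAt_const _)
  have hHpd : Differentiable ℝ (fun w => fderiv ℝ H w ((0 : ℝ), (1 : ℝ))) :=
    fun x => (hFd x).clm_apply (differentiableAt_const _)
  -- derivative of P
  have hPfun : P = fun z : ℝ × ℝ => z.2 - h * fderiv ℝ H z (1, 0) := funext fun z => hP z
  have hDP : ∀ u : ℝ × ℝ, fderiv ℝ P z u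
      = u.2 - h * fderiv ℝ (fun w => fderiv ℝ H w ((1 : ℝ), (0 : ℝ))) z u := by
    intro u
    rw [hPfun, fderiv_fun_sub differentiableAt_snd ((hHqd z).const_mul h),
      fderiv_const_mul (hHqd z) h]
    simp [fderiv_snd]
  -- derivative of the Q equation
  set G : ℝ × ℝ → ℝ := fun z => fderiv ℝ H (Q z, P z) (0, 1) with hGdef
  have hGd : Differentiable ℝ G := fun x =>
    (((hHpd (Q x, P x)).comp x ((hQd x).prodMk (hPd x))) :
      DifferentiableAt ℝ ((fun w => fderiv ℝ H w ((0 : ℝ), (1 : ℝ))) ∘ fun x => (Q x, P x)) x)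
  have hfun : (fun z : ℝ × ℝ => Q z - h * G z) = fun z : ℝ × ℝ => z.1 := by
    funext x
    show Q x - h * Hp H (Q x, P x) = x.1
    linarith [hQ x]
  have hDQ : ∀ u : ℝ × ℝ, fderiv ℝ Q z u - h * fderiv ℝ G z u = u.1 := by
    intro u
    have h1 : fderiv ℝ (fun z : ℝ × ℝ => Q z - h * G z) z u
        = fderiv ℝ Q z u - h * fderiv ℝ G z u := by
      rw [fderiv_fun_sub (hQd z) ((hGd z).const_mul h), fderiv_const_mul (hGd z) h]
      simp
    rw [← h1, hfun]
    simp [fderiv_fst]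
  -- chain rule for G
  have hchain : ∀ u : ℝ × ℝ, fderiv ℝ G z u
      = fderiv ℝ (fun w => fderiv ℝ H w ((0 : ℝ), (1 : ℝ))) (Q z, P z)
          (fderiv ℝ Q z u, fderiv ℝ P z u) := by
    intro u
    have hcomp : G = (fun w => fderiv ℝ H w ((0 : ℝ), (1 : ℝ))) ∘ (fun x => (Q x, P x)) := rfl
    rw [hcomp, fderiv_comp z (hHpd (Q z, P z)) ((hQd z).prodMk (hPd z))]
    simp [DifferentiableAt.fderiv_prodMk (hQd z) (hPd z)]
  set a := fderiv ℝ Q z (1, 0)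
  set b := fderiv ℝ Q z (0, 1)
  set c := fderiv ℝ P z (1, 0)
  set d := fderiv ℝ P z (0, 1)
  set A := Hqp H (Q z, P z) with hA
  set B := fderiv ℝ (fun w => fderiv ℝ H w ((0 : ℝ), (1 : ℝ))) (Q z, P z) (0, 1) with hB
  have hGe1 : fderiv ℝ G z (1, 0) = a * A + c * B := by
    rw [hchain (1, 0), expand_lin]; rfl
  have hGe2 : fderiv ℝ G z (0, 1) = b * A + d * B := by
    rw [hchain (0, 1), expand_lin]; rfl
  have eq1 : a - h * (a * A + c * B) = 1 := by
    have := hDQ (1, 0); rw [hGe1] at this; simpa using this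
  have eq2 : b - h * (b * A + d * B) = 0 := by
    have := hDQ (0, 1); rw [hGe2] at this; simpa using this
  have hd : d = 1 - h * Hqp H z := by
    have := hDP (0, 1)
    rw [swap_second hH] at this
    simpa using this
  rw [jacDet, ← hd]
  show (1 - h * A) * (a * d - b * c) = d
  linear_combination d * eq1 - c * eq2
end
end

section
/- Let H : ℝ² → ℝ be C³ and let (q,p) : ℝ → ℝ² be differentiable with q′(t) = ∂H/∂p(q(t),p(t)) and p′(t) = −∂H/∂q(q(t),p(t)) for all t. Fix t₀ ∈ ℝ. Then as h → 0 the midpoint DVI (MDVI) residuals are O(h³): (i) q(t₀+h) − q(t₀) − h·∂H/∂p((q(t₀)+q(t₀+h))/2, p(t₀+h/2)) = O(h³); and (ii) p(t₀+h/2) − p(t₀−h/2) + (h/2)·[∂H/∂q((q(t₀)+q(t₀+h))/2, p(t₀+h/2)) + ∂H/∂q((q(t₀−h)+q(t₀))/2, p(t₀−h/2))] = O(h³). Hence the midpoint DVI scheme is second-order accurate. -/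
open Asymptotics Topology

noncomputable section

lemma hasDerivAt_id_mul_of_continuousAt {g : ℝ → ℝ} (hg : ContinuousAt g 0) :
    HasDerivAt (fun h : ℝ => h * g h) (g 0) 0 := by
  rw [hasDerivAt_iff_isLittleO]
  have h1 : (fun h : ℝ => g h - g 0) =o[𝓝 (0:ℝ)] (fun _ => (1:ℝ)) := by
    rw [Asymptotics.isLittleO_one_iff]
    have := hg.tendsto.sub (tendsto_const_nhds (x := g 0)); simpa using this
  have h2 := (Asymptotics.isBigO_refl (fun h : ℝ => h - 0) (𝓝 (0:ℝ))).mul_isLittleO h1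
  have e : (fun h : ℝ => h * g h - 0 * g 0 - (h - 0) • g 0)
      = fun h : ℝ => (h - 0) * (g h - g 0) := by
    funext h; simp; ring
  rw [e]
  simpa using h2

lemma isBigO_pow_succ_of_deriv {f f' : ℝ → ℝ} {n : ℕ}
    (hf : ∀ x, HasDerivAt f (f' x) x) (h0 : f 0 = 0)
    (hO : f' =O[𝓝 (0:ℝ)] fun h => h ^ n) :
    f =O[𝓝 (0:ℝ)] fun h => h ^ (n + 1) := by
  obtain ⟨C, hC⟩ := hO.bound
  obtain ⟨ε, hε, hb⟩ := Metric.eventually_nhds_iff.1 hC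
  rw [Asymptotics.isBigO_iff]
  refine ⟨max C 0, Metric.eventually_nhds_iff.2 ⟨ε, hε, fun x hx => ?_⟩⟩
  have hconv : Convex ℝ (Metric.ball (0:ℝ) ε ∩ Metric.closedBall (0:ℝ) ‖x‖) :=
    (convex_ball _ _).inter (convex_closedBall _ _)
  have hxs : x ∈ Metric.ball (0:ℝ) ε ∩ Metric.closedBall (0:ℝ) ‖x‖ :=
    ⟨Metric.mem_ball.2 hx, by simp [Real.dist_eq, Real.norm_eq_abs]⟩
  have h0s : (0:ℝ) ∈ Metric.ball (0:ℝ) ε ∩ Metric.closedBall (0:ℝ) ‖x‖ :=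
    ⟨Metric.mem_ball_self hε, Metric.mem_closedBall_self (norm_nonneg x)⟩
  have key : ‖f x - f 0‖ ≤ (max C 0 * ‖x‖ ^ n) * ‖x - 0‖ := by
    refine hconv.norm_image_sub_le_of_norm_hasDerivWithin_le
      (fun y _ => (hf y).hasDerivWithinAt) (fun y hy => ?_) h0s hxs
    have hyb := hb (Metric.mem_ball.1 hy.1)
    have hyx : ‖y‖ ≤ ‖x‖ := by
      simpa [Real.dist_eq, Real.norm_eq_abs] using Metric.mem_closedBall.1 hy.2
    calc ‖f' y‖ ≤ C * ‖y ^ n‖ := hyb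
      _ ≤ max C 0 * ‖y ^ n‖ := mul_le_mul_of_nonneg_right (le_max_left _ _) (norm_nonneg _)
      _ ≤ max C 0 * ‖x‖ ^ n := by
          rw [norm_pow]
          exact mul_le_mul_of_nonneg_left (pow_le_pow_left₀ (norm_nonneg _) hyx n)
            (le_max_right _ _)
  rw [h0, sub_zero, sub_zero] at key
  calc ‖f x‖ ≤ max C 0 * ‖x‖ ^ n * ‖x‖ := key
    _ = max C 0 * ‖x ^ (n+1)‖ := by rw [norm_pow, pow_succ, mul_assoc]

lemma bigO_cube {F F1 F2 : ℝ → ℝ}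
    (hF : ∀ x, HasDerivAt F (F1 x) x)
    (hF1 : ∀ x, HasDerivAt F1 (F2 x) x)
    (hF2 : DifferentiableAt ℝ F2 0)
    (h0 : F 0 = 0) (h1 : F1 0 = 0) (h2 : F2 0 = 0) :
    F =O[𝓝 (0:ℝ)] fun h => h ^ 3 := by
  have o1 : F2 =O[𝓝 (0:ℝ)] fun h => h ^ 1 := by
    have h3 := hF2.isBigO_sub
    simp only [h2, sub_zero, pow_one] at h3 ⊢
    exact h3
  have o2 : F1 =O[𝓝 (0:ℝ)] fun h => h ^ 2 := isBigO_pow_succ_of_deriv hF1 h1 o1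
  exact isBigO_pow_succ_of_deriv hF h0 o2

lemma comp_curve {Φ : ℝ × ℝ → ℝ} (hΦ : ContDiff ℝ 2 Φ) {c c' : ℝ → ℝ × ℝ}
    (hc : ∀ h, HasDerivAt c (c' h) h) (hc' : ContDiff ℝ 1 c') (hc1 : ContDiff ℝ 1 c) :
    (∀ h, HasDerivAt (fun h => Φ (c h)) (fderiv ℝ Φ (c h) (c' h)) h)
    ∧ ContDiff ℝ 1 (fun h => fderiv ℝ Φ (c h) (c' h)) := by
  constructor
  · intro h
    exact ((hΦ.differentiable (by norm_num) (c h)).hasFDerivAt).comp_hasDerivAt h (hc h)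
  · exact ((hΦ.fderiv_right (by norm_num)).comp hc1).clm_apply hc'

/-- The midpoint DVI scheme is second-order accurate: along an exact solution of
Hamilton's equations the MDVI residuals are `O(h³)` as `h → 0`. -/
theorem mdvi_second_order_accurate
    (H : ℝ × ℝ → ℝ) (hH : ContDiff ℝ 3 H)
    (q p : ℝ → ℝ)
    (hq : ∀ t : ℝ, HasDerivAt q (Hp H (q t, p t)) t)
    (hp : ∀ t : ℝ, HasDerivAt p (-Hq H (q t, p t)) t)
    (t₀ : ℝ) :
    ((fun h : ℝ =>
        q (t₀ + h) - q t₀ - h * Hp H ((q t₀ + q (t₀ + h)) / 2, p (t₀ + h / 2)))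
      =O[𝓝 (0 : ℝ)] fun h : ℝ => h ^ 3)
    ∧ ((fun h : ℝ =>
        p (t₀ + h / 2) - p (t₀ - h / 2)
          + h / 2 * (Hq H ((q t₀ + q (t₀ + h)) / 2, p (t₀ + h / 2))
            + Hq H ((q (t₀ - h) + q t₀) / 2, p (t₀ - h / 2))))
      =O[𝓝 (0 : ℝ)] fun h : ℝ => h ^ 3) := by
  -- regularity
  have hHp2 : ContDiff ℝ 2 (Hp H) :=
    ((hH.fderiv_right (by norm_num)).clm_apply contDiff_const :
      ContDiff ℝ 2 fun z => fderiv ℝ H z (0, 1))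
  have hHq2 : ContDiff ℝ 2 (Hq H) :=
    ((hH.fderiv_right (by norm_num)).clm_apply contDiff_const :
      ContDiff ℝ 2 fun z => fderiv ℝ H z (1, 0))
  have hVc : ContDiff ℝ 2 (fun x : ℝ × ℝ => (Hp H x, -Hq H x)) := hHp2.prodMk hHq2.neg
  have hz : ∀ t, HasDerivAt (fun t => (q t, p t)) (Hp H (q t, p t), -Hq H (q t, p t)) t :=
    fun t => (hq t).prodMk (hp t)
  have hzdiff : Differentiable ℝ (fun t => (q t, p t)) := fun t => (hz t).differentiableAt
  have hdz : deriv (fun t => (q t, p t)) = fun t => (Hp H (q t, p t), -Hq H (q t, p t)) :=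
    funext fun t => (hz t).deriv
  have hz1 : ContDiff ℝ 1 (fun t => (q t, p t)) := by
    rw [contDiff_one_iff_deriv]
    exact ⟨hzdiff, by rw [hdz]; exact hVc.continuous.comp hzdiff.continuous⟩
  have hz2 : ContDiff ℝ 2 (fun t => (q t, p t)) := by
    rw [show (2 : WithTop ℕ∞) = 1 + 1 by norm_num, contDiff_succ_iff_deriv]
    refine ⟨hzdiff, by simp, ?_⟩
    rw [hdz]; exact (hVc.of_le one_le_two).comp hz1
  have hz3 : ContDiff ℝ 3 (fun t => (q t, p t)) := by
    rw [show (3 : WithTop ℕ∞) = 2 + 1 by norm_num, contDiff_succ_iff_deriv]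
    refine ⟨hzdiff, by simp, ?_⟩
    rw [hdz]; exact hVc.comp hz2
  have hq3 : ContDiff ℝ 3 q := contDiff_fst.comp hz3
  have hp3 : ContDiff ℝ 3 p := contDiff_snd.comp hz3
  have hVc : ContDiff ℝ 2 (fun x : ℝ × ℝ => (Hp H x, -Hq H x)) := hHp2.prodMk hHq2.neg
  have hz : ∀ t, HasDerivAt (fun t => (q t, p t)) (Hp H (q t, p t), -Hq H (q t, p t)) t :=
    fun t => (hq t).prodMk (hp t)
  -- curves
  set wp : ℝ → ℝ × ℝ := fun h => ((q t₀ + q (t₀ + h)) / 2, p (t₀ + h / 2)) with hwp_def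
  set up : ℝ → ℝ × ℝ := fun h =>
    (2⁻¹ : ℝ) • (Hp H (q (t₀ + h), p (t₀ + h)), -Hq H (q (t₀ + h / 2), p (t₀ + h / 2)))
    with hup_def
  set zp : ℝ → ℝ × ℝ := fun h => (q (t₀ + h), p (t₀ + h)) with hzp_def
  set zp' : ℝ → ℝ × ℝ := fun h => (Hp H (zp h), -Hq H (zp h)) with hzp'_def
  have hwp : ∀ h, HasDerivAt wp (up h) h := by
    intro h
    rw [hwp_def, hup_def]
    have h1 : HasDerivAt (fun h : ℝ => (q t₀ + q (t₀ + h)) / 2)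
        (Hp H (q (t₀ + h), p (t₀ + h)) * 1 / 2) h :=
      (((hq (t₀ + h)).comp h ((hasDerivAt_id h).const_add t₀)).const_add (q t₀)).div_const 2
    have h2 : HasDerivAt (fun h : ℝ => p (t₀ + h / 2))
        (-Hq H (q (t₀ + h / 2), p (t₀ + h / 2)) * (1 / 2)) h :=
      (hp (t₀ + h / 2)).comp h (((hasDerivAt_id h).div_const 2).const_add t₀)
    have := h1.prodMk h2
    convert this using 1
    simp [Prod.smul_mk, smul_eq_mul]
    constructor <;> ring
  have hzp : ∀ h, HasDerivAt zp (zp' h) h := by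
    intro h
    have := (hz (t₀ + h)).scomp h ((hasDerivAt_id h).const_add t₀)
    simpa [hzp_def, hzp'_def, Function.comp_def] using this
  -- ContDiff of curves
  have haff : ContDiff ℝ 3 (fun h : ℝ => t₀ + h) := contDiff_const.add contDiff_id
  have haffh : ContDiff ℝ 3 (fun h : ℝ => t₀ + h / 2) :=
    contDiff_const.add (contDiff_id.div_const 2)
  have hzpc2 : ContDiff ℝ 2 zp :=
    ((hq3.comp haff).prodMk (hp3.comp haff)).of_le (by norm_num)
  have hzphc2 : ContDiff ℝ 2 (fun h : ℝ => (q (t₀ + h / 2), p (t₀ + h / 2))) :=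
    ((hq3.comp haffh).prodMk (hp3.comp haffh)).of_le (by norm_num)
  have hzpc : ContDiff ℝ 1 zp := hzpc2.of_le one_le_two
  have hzp'c : ContDiff ℝ 1 zp' :=
    ((hHp2.comp hzpc2).prodMk (hHq2.comp hzpc2).neg).of_le one_le_two
  have hwpc : ContDiff ℝ 1 wp :=
    (((contDiff_const.add (hq3.comp haff)).div_const 2).prodMk (hp3.comp haffh)).of_le
      (by norm_num)
  have hupc : ContDiff ℝ 1 up := by
    rw [hup_def]
    exact (((hHp2.comp hzpc2).prodMk (hHq2.comp hzphc2).neg).of_le one_le_two).const_smul _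
  obtain ⟨hA, hA1c⟩ := comp_curve hHp2 hwp hupc hwpc
  obtain ⟨hc1, hc1c⟩ := comp_curve hHp2 hzp hzp'c hzpc
  set A1 : ℝ → ℝ := fun h => fderiv ℝ (Hp H) (wp h) (up h) with hA1_def
  set c1 : ℝ → ℝ := fun h => fderiv ℝ (Hp H) (zp h) (zp' h) with hc1_def
  set A2 : ℝ → ℝ := deriv A1 with hA2_def
  have hA1' : ∀ h, HasDerivAt A1 (A2 h) h := fun h => (hA1c.differentiable (by norm_num) h).hasDerivAt
  have hA2c : Continuous A2 := hA1c.continuous_deriv le_rfl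
  -- assemble
  have hF : ∀ x, HasDerivAt
      (fun h : ℝ => q (t₀ + h) - q t₀ - h * Hp H (wp h))
      (Hp H (zp x) - (Hp H (wp x) + x * A1 x)) x := by
    intro x
    have d1 : HasDerivAt (fun h : ℝ => q (t₀ + h)) (Hp H (zp x)) x := by
      have := (hq (t₀ + x)).comp x ((hasDerivAt_id x).const_add t₀)
      simpa [hzp_def, Function.comp_def] using this
    have d3 : HasDerivAt (fun h : ℝ => h * Hp H (wp h)) (Hp H (wp x) + x * A1 x) x := by
      have := (hasDerivAt_id x).mul (hA x)
      simpa [hA1_def, Pi.mul_def] using this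
    exact (d1.sub_const (q t₀)).sub d3
  have hF1 : ∀ x, HasDerivAt
      (fun h : ℝ => Hp H (zp h) - (Hp H (wp h) + h * A1 h))
      (c1 x - (A1 x + (A1 x + x * A2 x))) x := by
    intro x
    have d3 : HasDerivAt (fun h : ℝ => h * A1 h) (A1 x + x * A2 x) x := by
      have := (hasDerivAt_id x).mul (hA1' x)
      simpa [Pi.mul_def] using this
    exact (hc1 x).sub ((hA x).add d3)
  have hF2d : DifferentiableAt ℝ (fun x : ℝ => c1 x - (A1 x + (A1 x + x * A2 x))) 0 := by
    have dmul : DifferentiableAt ℝ (fun x : ℝ => x * A2 x) 0 :=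
      (hasDerivAt_id_mul_of_continuousAt hA2c.continuousAt).differentiableAt
    exact (hc1c.differentiable (by norm_num) 0).sub
      (((hA1c.differentiable (by norm_num) 0)).add ((hA1c.differentiable (by norm_num) 0).add dmul))
  have hw0 : wp 0 = (q t₀, p t₀) := by rw [hwp_def]; norm_num [add_self_div_two]
  have hzp0 : zp 0 = (q t₀, p t₀) := by rw [hzp_def]; norm_num
  have h0 : q (t₀ + 0) - q t₀ - 0 * Hp H (wp 0) = 0 := by norm_num
  have h1 : Hp H (zp 0) - (Hp H (wp 0) + 0 * A1 0) = 0 := by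
    rw [hw0, hzp0]; ring
  have h2 : c1 0 - (A1 0 + (A1 0 + 0 * A2 0)) = 0 := by
    have e1 : A1 0 = 2⁻¹ * c1 0 := by
      rw [hA1_def, hc1_def]
      simp only [hup_def, hzp'_def]
      rw [hw0, hzp0]
      rw [map_smul]
      norm_num [hzp0, smul_eq_mul, hzp_def]
    rw [e1]; ring
  have key1 := bigO_cube hF hF1 hF2d h0 h1 h2
  -- curves
  set wm : ℝ → ℝ × ℝ := fun h => ((q (t₀ - h) + q t₀) / 2, p (t₀ - h / 2)) with hwm_def
  set um : ℝ → ℝ × ℝ := fun h =>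
    (-(2⁻¹ : ℝ)) • (Hp H (q (t₀ - h), p (t₀ - h)), -Hq H (q (t₀ - h / 2), p (t₀ - h / 2)))
    with hum_def
  set cp : ℝ → ℝ × ℝ := fun h => (q (t₀ + h / 2), p (t₀ + h / 2)) with hcp_def
  set cp' : ℝ → ℝ × ℝ := fun h => (2⁻¹ : ℝ) • (Hp H (cp h), -Hq H (cp h)) with hcp'_def
  set cm : ℝ → ℝ × ℝ := fun h => (q (t₀ - h / 2), p (t₀ - h / 2)) with hcm_def
  set cm' : ℝ → ℝ × ℝ := fun h => (-(2⁻¹ : ℝ)) • (Hp H (cm h), -Hq H (cm h)) with hcm'_def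
  have hwp : ∀ h, HasDerivAt wp (up h) h := by
    intro h
    rw [hwp_def, hup_def]
    have h1 : HasDerivAt (fun h : ℝ => (q t₀ + q (t₀ + h)) / 2)
        (Hp H (q (t₀ + h), p (t₀ + h)) * 1 / 2) h :=
      (((hq (t₀ + h)).comp h ((hasDerivAt_id h).const_add t₀)).const_add (q t₀)).div_const 2
    have h2 : HasDerivAt (fun h : ℝ => p (t₀ + h / 2))
        (-Hq H (q (t₀ + h / 2), p (t₀ + h / 2)) * (1 / 2)) h :=
      (hp (t₀ + h / 2)).comp h (((hasDerivAt_id h).div_const 2).const_add t₀)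
    convert h1.prodMk h2 using 1
    simp [Prod.smul_mk, smul_eq_mul]
    constructor <;> ring
  have hwm : ∀ h, HasDerivAt wm (um h) h := by
    intro h
    rw [hwm_def, hum_def]
    have h1 : HasDerivAt (fun h : ℝ => (q (t₀ - h) + q t₀) / 2)
        (Hp H (q (t₀ - h), p (t₀ - h)) * (-1) / 2) h :=
      (((hq (t₀ - h)).comp h ((hasDerivAt_id h).const_sub t₀)).add_const (q t₀)).div_const 2
    have h2 : HasDerivAt (fun h : ℝ => p (t₀ - h / 2))
        (-Hq H (q (t₀ - h / 2), p (t₀ - h / 2)) * (-(1 / 2))) h :=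
      (hp (t₀ - h / 2)).comp h (((hasDerivAt_id h).div_const 2).const_sub t₀)
    convert h1.prodMk h2 using 1
    simp [Prod.smul_mk, smul_eq_mul]
    constructor <;> ring
  have hcp : ∀ h, HasDerivAt cp (cp' h) h := by
    intro h
    have := (hz (t₀ + h / 2)).scomp h (((hasDerivAt_id h).div_const 2).const_add t₀)
    rw [hcp'_def]
    convert this using 1
    · rfl
    · rfl
    · rfl
    rw [hcp_def]
    · rfl
    · norm_num [hcp_def]
  have hcm : ∀ h, HasDerivAt cm (cm' h) h := by
    intro h
    have := (hz (t₀ - h / 2)).scomp h (((hasDerivAt_id h).div_const 2).const_sub t₀)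
    rw [hcm'_def]
    convert this using 1
    · rfl
    · rfl
    · rfl
    rw [hcm_def]
    · rfl
    · norm_num [hcm_def]
  -- ContDiff of curves
  have haff : ContDiff ℝ 3 (fun h : ℝ => t₀ + h) := contDiff_const.add contDiff_id
  have haffh : ContDiff ℝ 3 (fun h : ℝ => t₀ + h / 2) :=
    contDiff_const.add (contDiff_id.div_const 2)
  have haffm : ContDiff ℝ 3 (fun h : ℝ => t₀ - h) := contDiff_const.sub contDiff_id
  have haffmh : ContDiff ℝ 3 (fun h : ℝ => t₀ - h / 2) :=
    contDiff_const.sub (contDiff_id.div_const 2)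
  have hzpc2 : ContDiff ℝ 2 (fun h : ℝ => (q (t₀ + h), p (t₀ + h))) :=
    ((hq3.comp haff).prodMk (hp3.comp haff)).of_le (by norm_num)
  have hzphc2 : ContDiff ℝ 2 (fun h : ℝ => (q (t₀ + h / 2), p (t₀ + h / 2))) :=
    ((hq3.comp haffh).prodMk (hp3.comp haffh)).of_le (by norm_num)
  have hzmc2 : ContDiff ℝ 2 (fun h : ℝ => (q (t₀ - h), p (t₀ - h))) :=
    ((hq3.comp haffm).prodMk (hp3.comp haffm)).of_le (by norm_num)
  have hzmhc2 : ContDiff ℝ 2 (fun h : ℝ => (q (t₀ - h / 2), p (t₀ - h / 2))) :=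
    ((hq3.comp haffmh).prodMk (hp3.comp haffmh)).of_le (by norm_num)
  have hwpc : ContDiff ℝ 1 wp :=
    (((contDiff_const.add (hq3.comp haff)).div_const 2).prodMk (hp3.comp haffh)).of_le
      (by norm_num)
  have hwmc : ContDiff ℝ 1 wm :=
    ((((hq3.comp haffm).add contDiff_const).div_const 2).prodMk (hp3.comp haffmh)).of_le
      (by norm_num)
  have hupc : ContDiff ℝ 1 up := by
    rw [hup_def]
    exact (((hHp2.comp hzpc2).prodMk (hHq2.comp hzphc2).neg).of_le one_le_two).const_smul _
  have humc : ContDiff ℝ 1 um := by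
    rw [hum_def]
    exact (((hHp2.comp hzmc2).prodMk (hHq2.comp hzmhc2).neg).of_le one_le_two).const_smul _
  have hcpc : ContDiff ℝ 1 cp := hzphc2.of_le one_le_two
  have hcmc : ContDiff ℝ 1 cm := hzmhc2.of_le one_le_two
  have hcp'c : ContDiff ℝ 1 cp' := by
    rw [hcp'_def]
    exact (((hHp2.comp hzphc2).prodMk (hHq2.comp hzphc2).neg).of_le one_le_two).const_smul _
  have hcm'c : ContDiff ℝ 1 cm' := by
    rw [hcm'_def]
    exact (((hHp2.comp hzmhc2).prodMk (hHq2.comp hzmhc2).neg).of_le one_le_two).const_smul _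
  obtain ⟨hBp, hBp1c⟩ := comp_curve hHq2 hwp hupc hwpc
  obtain ⟨hBm, hBm1c⟩ := comp_curve hHq2 hwm humc hwmc
  obtain ⟨hDp, hDpc⟩ := comp_curve hHq2 hcp hcp'c hcpc
  obtain ⟨hDm, hDmc⟩ := comp_curve hHq2 hcm hcm'c hcmc
  set Bp1 : ℝ → ℝ := fun h => fderiv ℝ (Hq H) (wp h) (up h) with hBp1_def
  set Bm1 : ℝ → ℝ := fun h => fderiv ℝ (Hq H) (wm h) (um h) with hBm1_def
  set Dp : ℝ → ℝ := fun h => fderiv ℝ (Hq H) (cp h) (cp' h) with hDp_def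
  set Dm : ℝ → ℝ := fun h => fderiv ℝ (Hq H) (cm h) (cm' h) with hDm_def
  set S1 : ℝ → ℝ := fun h => Bp1 h + Bm1 h with hS1_def
  have hS1c : ContDiff ℝ 1 S1 := hBp1c.add hBm1c
  set S2 : ℝ → ℝ := deriv S1 with hS2_def
  have hS1' : ∀ h, HasDerivAt S1 (S2 h) h := fun h => (hS1c.differentiable (by norm_num) h).hasDerivAt
  have hS2c : Continuous S2 := hS1c.continuous_deriv le_rfl
  -- assemble
  have hG : ∀ x, HasDerivAt
      (fun h : ℝ => p (t₀ + h / 2) - p (t₀ - h / 2) + h / 2 * (Hq H (wp h) + Hq H (wm h)))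
      (-Hq H (cp x) * (1 / 2) - -Hq H (cm x) * -(1 / 2)
        + (1 / 2 * (Hq H (wp x) + Hq H (wm x)) + x / 2 * S1 x)) x := by
    intro x
    have d1 : HasDerivAt (fun h : ℝ => p (t₀ + h / 2)) (-Hq H (cp x) * (1 / 2)) x :=
      (hp (t₀ + x / 2)).comp x (((hasDerivAt_id x).div_const 2).const_add t₀)
    have d2 : HasDerivAt (fun h : ℝ => p (t₀ - h / 2)) (-Hq H (cm x) * -(1 / 2)) x :=
      (hp (t₀ - x / 2)).comp x (((hasDerivAt_id x).div_const 2).const_sub t₀)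
    have d3 : HasDerivAt (fun h : ℝ => h / 2 * (Hq H (wp h) + Hq H (wm h)))
        (1 / 2 * (Hq H (wp x) + Hq H (wm x)) + x / 2 * S1 x) x := by
      have := ((hasDerivAt_id x).div_const 2).mul ((hBp x).add (hBm x))
      simpa [hS1_def, hBp1_def, hBm1_def, Pi.mul_def, Pi.add_def] using this
    exact (d1.sub d2).add d3
  have hG1 : ∀ x, HasDerivAt
      (fun h : ℝ => -Hq H (cp h) * (1 / 2) - -Hq H (cm h) * -(1 / 2)
        + (1 / 2 * (Hq H (wp h) + Hq H (wm h)) + h / 2 * S1 h))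
      (-Dp x * (1 / 2) - -Dm x * -(1 / 2)
        + (1 / 2 * S1 x + (1 / 2 * S1 x + x / 2 * S2 x))) x := by
    intro x
    have t1 : HasDerivAt (fun h : ℝ => -Hq H (cp h) * (1 / 2)) (-Dp x * (1 / 2)) x :=
      ((hDp x).neg).mul_const _
    have t2 : HasDerivAt (fun h : ℝ => -Hq H (cm h) * -(1 / 2)) (-Dm x * -(1 / 2)) x :=
      ((hDm x).neg).mul_const _
    have t3 : HasDerivAt (fun h : ℝ => 1 / 2 * (Hq H (wp h) + Hq H (wm h)))
        (1 / 2 * S1 x) x := by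
      have := ((hBp x).add (hBm x)).const_mul (1 / 2 : ℝ)
      simpa [hS1_def, hBp1_def, hBm1_def] using this
    have t4 : HasDerivAt (fun h : ℝ => h / 2 * S1 h) (1 / 2 * S1 x + x / 2 * S2 x) x :=
      ((hasDerivAt_id x).div_const 2).mul (hS1' x)
    exact (t1.sub t2).add (t3.add t4)
  have hG2d : DifferentiableAt ℝ
      (fun x : ℝ => -Dp x * (1 / 2) - -Dm x * -(1 / 2)
        + (1 / 2 * S1 x + (1 / 2 * S1 x + x / 2 * S2 x))) 0 := by
    have dmul : DifferentiableAt ℝ (fun x : ℝ => x / 2 * S2 x) 0 := by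
      have e : (fun x : ℝ => x / 2 * S2 x) = fun x : ℝ => x * (S2 x / 2) :=
        funext fun x => by ring
      rw [e]
      exact (hasDerivAt_id_mul_of_continuousAt
        ((hS2c.div_const 2).continuousAt)).differentiableAt
    have dS1 : DifferentiableAt ℝ S1 0 := hS1c.differentiable (by norm_num) 0
    exact ((((hDpc.differentiable (by norm_num) 0).neg.mul_const _).sub
        ((hDmc.differentiable (by norm_num) 0).neg.mul_const _)).add
      ((dS1.const_mul _).add ((dS1.const_mul _).add dmul)))
  -- values at 0
  have hw0 : wp 0 = (q t₀, p t₀) := by rw [hwp_def]; norm_num [add_self_div_two]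
  have hwm0 : wm 0 = (q t₀, p t₀) := by rw [hwm_def]; norm_num [add_self_div_two]
  have hcp0 : cp 0 = (q t₀, p t₀) := by rw [hcp_def]; norm_num
  have hcm0 : cm 0 = (q t₀, p t₀) := by rw [hcm_def]; norm_num
  set K : ℝ := fderiv ℝ (Hq H) (q t₀, p t₀) (Hp H (q t₀, p t₀), -Hq H (q t₀, p t₀)) with hK_def
  have eup0 : up 0 = (2⁻¹ : ℝ) • (Hp H (q t₀, p t₀), -Hq H (q t₀, p t₀)) := by
    rw [hup_def]; norm_num
  have eum0 : um 0 = (-(2⁻¹ : ℝ)) • (Hp H (q t₀, p t₀), -Hq H (q t₀, p t₀)) := by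
    rw [hum_def]; norm_num
  have ecp'0 : cp' 0 = (2⁻¹ : ℝ) • (Hp H (q t₀, p t₀), -Hq H (q t₀, p t₀)) := by
    show (2⁻¹ : ℝ) • (Hp H (cp 0), -Hq H (cp 0)) = _
    rw [hcp0]
  have ecm'0 : cm' 0 = (-(2⁻¹ : ℝ)) • (Hp H (q t₀, p t₀), -Hq H (q t₀, p t₀)) := by
    show (-(2⁻¹ : ℝ)) • (Hp H (cm 0), -Hq H (cm 0)) = _
    rw [hcm0]
  have eBp : Bp1 0 = 2⁻¹ * K := by
    show (fderiv ℝ (Hq H) (wp 0)) (up 0) = 2⁻¹ * K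
    rw [hw0, eup0, map_smul, smul_eq_mul, hK_def]
  have eBm : Bm1 0 = -(2⁻¹ * K) := by
    show (fderiv ℝ (Hq H) (wm 0)) (um 0) = -(2⁻¹ * K)
    rw [hwm0, eum0, map_smul, smul_eq_mul, hK_def]; ring
  have eDp : Dp 0 = 2⁻¹ * K := by
    show (fderiv ℝ (Hq H) (cp 0)) (cp' 0) = 2⁻¹ * K
    rw [hcp0, ecp'0, map_smul, smul_eq_mul, hK_def]
  have eDm : Dm 0 = -(2⁻¹ * K) := by
    show (fderiv ℝ (Hq H) (cm 0)) (cm' 0) = -(2⁻¹ * K)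
    rw [hcm0, ecm'0, map_smul, smul_eq_mul, hK_def]; ring
  have g0 : p (t₀ + 0 / 2) - p (t₀ - 0 / 2) + 0 / 2 * (Hq H (wp 0) + Hq H (wm 0)) = 0 := by
    norm_num
  have g1 : -Hq H (cp 0) * (1 / 2) - -Hq H (cm 0) * -(1 / 2)
      + (1 / 2 * (Hq H (wp 0) + Hq H (wm 0)) + 0 / 2 * S1 0) = 0 := by
    rw [hw0, hwm0, hcp0, hcm0]; ring
  have g2 : -Dp 0 * (1 / 2) - -Dm 0 * -(1 / 2)
      + (1 / 2 * S1 0 + (1 / 2 * S1 0 + 0 / 2 * S2 0)) = 0 := by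
    have eS1 : S1 0 = 0 := by rw [hS1_def]; simp only []; rw [eBp, eBm]; ring
    rw [eDp, eDm, eS1]; ring
  have key2 := bigO_cube hG hG1 hG2d g0 g1 g2
  refine ⟨by simpa [hwp_def] using key1, by simpa [hwp_def, hwm_def] using key2⟩
end
end

section
/- Let H : ℝ² → ℝ be C³ and let (q,p) : ℝ → ℝ² be differentiable with q′(t) = ∂H/∂p(q(t),p(t)) and p′(t) = −∂H/∂q(q(t),p(t)) for all t. Fix t₀ ∈ ℝ. Then as h → 0 the trapezoidal DVI (TDVI) residuals are O(h³): (i) q(t₀+h) − q(t₀) − (h/2)·[∂H/∂p(q(t₀), p(t₀+h/2)) + ∂H/∂p(q(t₀+h), p(t₀+h/2))] = O(h³); and (ii) p(t₀+h/2) − p(t₀−h/2) + (h/2)·[∂H/∂q(q(t₀), p(t₀+h/2)) + ∂H/∂q(q(t₀), p(t₀−h/2))] = O(h³). Hence the trapezoidal DVI scheme is second-order accurate. -/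
open Asymptotics Topology Filter

noncomputable section

lemma mvt_step {f f' : ℝ → ℝ} {n : ℕ} (hf0 : f 0 = 0)
    (hf : ∀ s, HasDerivAt f (f' s) s)
    (hO : f' =O[𝓝 (0:ℝ)] fun h => h ^ n) :
    f =O[𝓝 (0:ℝ)] fun h => h ^ (n+1) := by
  obtain ⟨C, hC⟩ := hO.bound
  rw [Metric.eventually_nhds_iff] at hC
  obtain ⟨ε, hε, hball⟩ := hC
  rw [isBigO_iff]
  refine ⟨|C|, Metric.eventually_nhds_iff.mpr ⟨ε, hε, fun h hh => ?_⟩⟩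
  have hhε : |h| < ε := by simpa [Real.dist_eq] using hh
  have habs : ∀ s ∈ Set.uIcc (0:ℝ) h, |s| ≤ |h| := by
    intro s hs
    rcases Set.mem_uIcc.mp hs with ⟨h1, h2⟩ | ⟨h1, h2⟩ <;> rw [abs_le] <;>
      constructor <;> nlinarith [le_abs_self h, neg_abs_le h]
  have bound : ∀ s ∈ Set.uIcc (0:ℝ) h, ‖f' s‖ ≤ |C| * |h| ^ n := by
    intro s hs
    have hsd : dist s 0 < ε := by
      rw [Real.dist_eq, sub_zero]; exact lt_of_le_of_lt (habs s hs) hhε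
    calc ‖f' s‖ ≤ C * ‖s ^ n‖ := hball hsd
      _ ≤ |C| * |s| ^ n := by
          rw [norm_pow, Real.norm_eq_abs]
          exact mul_le_mul_of_nonneg_right (le_abs_self C) (by positivity)
      _ ≤ |C| * |h| ^ n := by
          exact mul_le_mul_of_nonneg_left (pow_le_pow_left₀ (abs_nonneg s) (habs s hs) n) (abs_nonneg C)
  have hmvt := Convex.norm_image_sub_le_of_norm_hasDerivWithin_le
    (f := f) (f' := f') (C := |C| * |h| ^ n)
    (fun s hs => (hf s).hasDerivWithinAt) bound (convex_uIcc _ _)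
    Set.left_mem_uIcc Set.right_mem_uIcc
  rw [hf0, sub_zero, sub_zero] at hmvt
  calc ‖f h‖ ≤ |C| * |h| ^ n * ‖h‖ := hmvt
    _ = |C| * ‖h ^ (n+1)‖ := by rw [norm_pow, Real.norm_eq_abs, pow_succ]; ring

lemma taylor2 {g g' : ℝ → ℝ} (hg : ∀ s, HasDerivAt g (g' s) s)
    (hg' : DifferentiableAt ℝ g' 0) :
    (fun h => g h - g 0 - g' 0 * h) =O[𝓝 (0:ℝ)] fun h => h ^ 2 := by
  apply mvt_step (f' := fun h => g' h - g' 0) (n := 1) (by simp)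
  · intro s
    simpa using ((hg s).sub_const (g 0)).fun_sub ((hasDerivAt_id s).const_mul (g' 0))
  · simpa using hg'.isBigO_sub

lemma taylor3 {g g' g'' : ℝ → ℝ} (hg : ∀ s, HasDerivAt g (g' s) s)
    (hg' : ∀ s, HasDerivAt g' (g'' s) s) (h2 : DifferentiableAt ℝ g'' 0) :
    (fun h => g h - g 0 - g' 0 * h - g'' 0 * h ^ 2 / 2) =O[𝓝 (0:ℝ)] fun h => h ^ 3 := by
  apply mvt_step (f' := fun h => g' h - g' 0 - g'' 0 * h) (n := 2) (by simp)
  · intro s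
    have h1 : HasDerivAt (fun h => g h - g 0 - g' 0 * h) (g' s - g' 0) s := by
      simpa using ((hg s).sub_const (g 0)).fun_sub ((hasDerivAt_id s).const_mul (g' 0))
    have h2' : HasDerivAt (fun h : ℝ => g'' 0 * h ^ 2 / 2) (g'' 0 * s) s := by
      have := ((hasDerivAt_pow 2 s).const_mul (g'' 0)).div_const 2
      refine this.congr_deriv ?_; norm_num; ring
    simpa using h1.fun_sub h2'
  · exact taylor2 hg' h2

/-- The trapezoidal DVI scheme is second-order accurate: along an exact solution of
Hamilton's equations the TDVI residuals are `O(h³)` as `h → 0`. -/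
theorem tdvi_second_order_accurate
    (H : ℝ × ℝ → ℝ) (hH : ContDiff ℝ 3 H)
    (q p : ℝ → ℝ)
    (hq : ∀ t : ℝ, HasDerivAt q (Hp H (q t, p t)) t)
    (hp : ∀ t : ℝ, HasDerivAt p (-Hq H (q t, p t)) t)
    (t₀ : ℝ) :
    ((fun h : ℝ =>
        q (t₀ + h) - q t₀
          - h / 2 * (Hp H (q t₀, p (t₀ + h / 2)) + Hp H (q (t₀ + h), p (t₀ + h / 2))))
      =O[𝓝 (0 : ℝ)] fun h : ℝ => h ^ 3)
    ∧ ((fun h : ℝ =>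
        p (t₀ + h / 2) - p (t₀ - h / 2)
          + h / 2 * (Hq H (q t₀, p (t₀ + h / 2)) + Hq H (q t₀, p (t₀ - h / 2))))
      =O[𝓝 (0 : ℝ)] fun h : ℝ => h ^ 3) := by
  have hgrad : ContDiff ℝ 2 (fderiv ℝ H) := hH.fderiv_right (by norm_num)
  have hHp2 : ContDiff ℝ 2 (Hp H) :=
    (ContinuousLinearMap.apply ℝ ℝ ((0:ℝ), (1:ℝ))).contDiff.comp hgrad
  have hHq2 : ContDiff ℝ 2 (Hq H) :=
    (ContinuousLinearMap.apply ℝ ℝ ((1:ℝ), (0:ℝ))).contDiff.comp hgrad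
  have hqd : Differentiable ℝ q := fun t => (hq t).differentiableAt
  have hpd : Differentiable ℝ p := fun t => (hp t).differentiableAt
  have hzd : Differentiable ℝ (fun t => (q t, p t)) := hqd.prodMk hpd
  set a : ℝ → ℝ := fun t => Hq H (q t, p t) with ha_def
  set b : ℝ → ℝ := fun t => Hp H (q t, p t) with hb_def
  have had : Differentiable ℝ a := (hHq2.differentiable two_ne_zero).comp hzd
  have hbd : Differentiable ℝ b := (hHp2.differentiable two_ne_zero).comp hzd
  have hz : ∀ t, HasDerivAt (fun t => (q t, p t)) (b t, -a t) t := fun t => (hq t).prodMk (hp t)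
  set a' : ℝ → ℝ := fun t => fderiv ℝ (Hq H) (q t, p t) (b t, -a t) with ha'_def
  set b' : ℝ → ℝ := fun t => fderiv ℝ (Hp H) (q t, p t) (b t, -a t) with hb'_def
  have hb : ∀ t, HasDerivAt b (b' t) t := fun t =>
    ((hHp2.differentiable two_ne_zero _).hasFDerivAt).comp_hasDerivAt t (hz t)
  have ha : ∀ t, HasDerivAt a (a' t) t := fun t =>
    ((hHq2.differentiable two_ne_zero _).hasFDerivAt).comp_hasDerivAt t (hz t)
  have hΦp : Differentiable ℝ (fun t => fderiv ℝ (Hp H) (q t, p t)) :=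
    ((hHp2.fderiv_right (by norm_num)).differentiable one_ne_zero).comp hzd
  have hΦq : Differentiable ℝ (fun t => fderiv ℝ (Hq H) (q t, p t)) :=
    ((hHq2.fderiv_right (by norm_num)).differentiable one_ne_zero).comp hzd
  have hb'd : Differentiable ℝ b' := hΦp.clm_apply (hbd.prodMk had.neg)
  have ha'd : Differentiable ℝ a' := hΦq.clm_apply (hbd.prodMk had.neg)
  -- affine inner maps
  have innW : ∀ h:ℝ, HasDerivAt (fun h:ℝ => t₀ + h) 1 h := fun h => (hasDerivAt_id h).const_add t₀
  have innH : ∀ h:ℝ, HasDerivAt (fun h:ℝ => t₀ + h/2) (1/2) h :=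
    fun h => ((hasDerivAt_id h).div_const 2).const_add t₀
  have innM : ∀ h:ℝ, HasDerivAt (fun h:ℝ => t₀ - h/2) (-(1/2)) h :=
    fun h => ((hasDerivAt_id h).div_const 2).const_sub t₀
  have dW : Differentiable ℝ (fun h:ℝ => t₀ + h) := fun h => (innW h).differentiableAt
  have dH : Differentiable ℝ (fun h:ℝ => t₀ + h/2) := fun h => (innH h).differentiableAt
  have dM : Differentiable ℝ (fun h:ℝ => t₀ - h/2) := fun h => (innM h).differentiableAt
  -- shifted solution curves
  have hq1 : ∀ h:ℝ, HasDerivAt (fun h => q (t₀ + h)) (b (t₀ + h)) h :=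
    fun h => by have := (hq (t₀+h)).comp h (innW h); rw [mul_one] at this; exact this
  have hpP : ∀ h:ℝ, HasDerivAt (fun h => p (t₀ + h/2)) (-a (t₀ + h/2) * (1/2)) h :=
    fun h => (hp (t₀+h/2)).comp h (innH h)
  have hpM : ∀ h:ℝ, HasDerivAt (fun h => p (t₀ - h/2)) (-a (t₀ - h/2) * (-(1/2))) h :=
    fun h => (hp (t₀-h/2)).comp h (innM h)
  have hg1' : ∀ h:ℝ, HasDerivAt (fun h => b (t₀ + h)) (b' (t₀ + h)) h :=
    fun h => by have := (hb (t₀+h)).comp h (innW h); rw [mul_one] at this; exact this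
  have hg1''d : DifferentiableAt ℝ (fun h => b' (t₀ + h)) 0 := (hb'd.comp dW) 0
  -- Taylor for q(t₀+h)
  have hA : (fun h:ℝ => q (t₀+h) - q (t₀+0) - b (t₀+0) * h - b' (t₀+0) * h^2/2)
      =O[𝓝 (0:ℝ)] fun h => h^3 := taylor3 hq1 hg1' hg1''d
  -- curves in the plane
  have cu : ∀ h:ℝ, HasDerivAt (fun h => (q t₀, p (t₀+h/2))) ((0:ℝ), -a (t₀+h/2) * (1/2)) h :=
    fun h => (hasDerivAt_const h (q t₀)).prodMk (hpP h)
  have cv : ∀ h:ℝ, HasDerivAt (fun h => (q (t₀+h), p (t₀+h/2))) (b (t₀+h), -a (t₀+h/2) * (1/2)) h :=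
    fun h => (hq1 h).prodMk (hpP h)
  have cw : ∀ h:ℝ, HasDerivAt (fun h => (q t₀, p (t₀-h/2))) ((0:ℝ), -a (t₀-h/2) * (-(1/2))) h :=
    fun h => (hasDerivAt_const h (q t₀)).prodMk (hpM h)
  -- G1 and its derivative
  set G1 : ℝ → ℝ := fun h => Hp H (q t₀, p (t₀+h/2)) + Hp H (q (t₀+h), p (t₀+h/2)) with hG1_def
  set G1' : ℝ → ℝ := fun h =>
      fderiv ℝ (Hp H) (q t₀, p (t₀+h/2)) ((0:ℝ), -a (t₀+h/2) * (1/2))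
      + fderiv ℝ (Hp H) (q (t₀+h), p (t₀+h/2)) (b (t₀+h), -a (t₀+h/2) * (1/2)) with hG1'_def
  have hG1 : ∀ h:ℝ, HasDerivAt G1 (G1' h) h := fun h =>
    (((hHp2.differentiable two_ne_zero _).hasFDerivAt).comp_hasDerivAt h (cu h)).add
      (((hHp2.differentiable two_ne_zero _).hasFDerivAt).comp_hasDerivAt h (cv h))
  have hG1'd : DifferentiableAt ℝ G1' 0 := by
    apply DifferentiableAt.add
    · exact (((((hHp2.fderiv_right (by norm_num)).differentiable one_ne_zero).comp
        ((differentiable_const (q t₀)).prodMk (hpd.comp dH))).clm_apply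
        ((differentiable_const (0:ℝ)).prodMk (((had.comp dH).neg).mul_const (1/2)))) 0)
    · exact (((((hHp2.fderiv_right (by norm_num)).differentiable one_ne_zero).comp
        ((hqd.comp dW).prodMk (hpd.comp dH))).clm_apply
        ((hbd.comp dW).prodMk (((had.comp dH).neg).mul_const (1/2)))) 0)
  have hG1T : (fun h:ℝ => G1 h - G1 0 - G1' 0 * h) =O[𝓝 (0:ℝ)] fun h => h^2 :=
    taylor2 hG1 hG1'd
  -- values at 0
  have vG1 : G1 0 = b t₀ + b t₀ := by simp [hG1_def, hb_def]
  have vG1' : G1' 0 = b' t₀ := by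
    rw [hG1'_def]
    simp only [add_zero, zero_div, mul_one]
    rw [← ContinuousLinearMap.map_add]
    rw [hb'_def]
    norm_num
    congr 1
    rw [Prod.mk.injEq]
    exact ⟨rfl, by ring⟩
  -- assemble part (i)
  have hmul1 : (fun h:ℝ => h * (G1 h - G1 0 - G1' 0 * h)) =O[𝓝 (0:ℝ)] fun h => h^3 :=
    ((isBigO_refl (fun h:ℝ => h) (𝓝 0)).mul hG1T).congr (fun x => rfl) (fun x => by ring)
  have part1 : (fun h : ℝ =>
        q (t₀ + h) - q t₀
          - h / 2 * (Hp H (q t₀, p (t₀ + h / 2)) + Hp H (q (t₀ + h), p (t₀ + h / 2))))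
      =O[𝓝 (0 : ℝ)] fun h : ℝ => h ^ 3 := by
    have key1 : (fun h : ℝ =>
        q (t₀ + h) - q t₀
          - h / 2 * (Hp H (q t₀, p (t₀ + h / 2)) + Hp H (q (t₀ + h), p (t₀ + h / 2))))
      = fun h : ℝ => (q (t₀+h) - q (t₀+0) - b (t₀+0) * h - b' (t₀+0) * h^2/2)
          - (1/2) * (h * (G1 h - G1 0 - G1' 0 * h)) := by
      funext h
      rw [vG1, vG1']
      simp only [hG1_def, add_zero, hb_def, hb'_def]
      ring
    rw [key1]
    exact hA.sub (hmul1.const_mul_left (1/2))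
  -- part (ii)
  have hg2 : ∀ h:ℝ, HasDerivAt (fun h => p (t₀+h/2) - p (t₀-h/2))
      (-a (t₀+h/2) * (1/2) - -a (t₀-h/2) * (-(1/2))) h := fun h => (hpP h).sub (hpM h)
  have hg2' : ∀ h:ℝ, HasDerivAt (fun h => -a (t₀+h/2) * (1/2) - -a (t₀-h/2) * (-(1/2)))
      (-(a' (t₀+h/2) * (1/2)) * (1/2) - -(a' (t₀-h/2) * (-(1/2))) * (-(1/2))) h := fun h =>
    ((((ha (t₀+h/2)).comp h (innH h)).neg).mul_const (1/2)).sub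
      ((((ha (t₀-h/2)).comp h (innM h)).neg).mul_const (-(1/2)))
  have hg2''d : DifferentiableAt ℝ
      (fun h:ℝ => -(a' (t₀+h/2) * (1/2)) * (1/2) - -(a' (t₀-h/2) * (-(1/2))) * (-(1/2))) 0 :=
    ((((((ha'd.comp dH).mul_const (1/2)).neg).mul_const (1/2))).sub
      ((((ha'd.comp dM).mul_const (-(1/2))).neg).mul_const (-(1/2)))) 0
  have hB : (fun h:ℝ => (p (t₀+h/2) - p (t₀-h/2)) - (p (t₀+0/2) - p (t₀-0/2))
      - (-a (t₀+0/2) * (1/2) - -a (t₀-0/2) * (-(1/2))) * h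
      - (-(a' (t₀+0/2) * (1/2)) * (1/2) - -(a' (t₀-0/2) * (-(1/2))) * (-(1/2))) * h^2/2)
      =O[𝓝 (0:ℝ)] fun h => h^3 := taylor3 hg2 hg2' hg2''d
  set G2 : ℝ → ℝ := fun h => Hq H (q t₀, p (t₀+h/2)) + Hq H (q t₀, p (t₀-h/2)) with hG2_def
  set G2' : ℝ → ℝ := fun h =>
      fderiv ℝ (Hq H) (q t₀, p (t₀+h/2)) ((0:ℝ), -a (t₀+h/2) * (1/2))
      + fderiv ℝ (Hq H) (q t₀, p (t₀-h/2)) ((0:ℝ), -a (t₀-h/2) * (-(1/2))) with hG2'_def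
  have hG2 : ∀ h:ℝ, HasDerivAt G2 (G2' h) h := fun h =>
    (((hHq2.differentiable two_ne_zero _).hasFDerivAt).comp_hasDerivAt h (cu h)).add
      (((hHq2.differentiable two_ne_zero _).hasFDerivAt).comp_hasDerivAt h (cw h))
  have hG2'd : DifferentiableAt ℝ G2' 0 := by
    apply DifferentiableAt.add
    · exact (((((hHq2.fderiv_right (by norm_num)).differentiable one_ne_zero).comp
        ((differentiable_const (q t₀)).prodMk (hpd.comp dH))).clm_apply
        ((differentiable_const (0:ℝ)).prodMk (((had.comp dH).neg).mul_const (1/2)))) 0)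
    · exact (((((hHq2.fderiv_right (by norm_num)).differentiable one_ne_zero).comp
        ((differentiable_const (q t₀)).prodMk (hpd.comp dM))).clm_apply
        ((differentiable_const (0:ℝ)).prodMk (((had.comp dM).neg).mul_const (-(1/2))))) 0)
  have hG2T : (fun h:ℝ => G2 h - G2 0 - G2' 0 * h) =O[𝓝 (0:ℝ)] fun h => h^2 :=
    taylor2 hG2 hG2'd
  have vG2 : G2 0 = a t₀ + a t₀ := by simp [hG2_def, ha_def]
  have vG2' : G2' 0 = 0 := by
    rw [hG2'_def]
    simp only [zero_div, add_zero, sub_zero]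
    rw [← ContinuousLinearMap.map_add]
    have : ((0:ℝ), -a t₀ * (1/2)) + ((0:ℝ), -a t₀ * (-(1/2))) = ((0:ℝ), (0:ℝ)) := by
      rw [Prod.mk_add_mk, Prod.mk.injEq]
      exact ⟨by ring, by ring⟩
    rw [this]
    exact ContinuousLinearMap.map_zero _
  have hmul2 : (fun h:ℝ => h * (G2 h - G2 0 - G2' 0 * h)) =O[𝓝 (0:ℝ)] fun h => h^3 :=
    ((isBigO_refl (fun h:ℝ => h) (𝓝 0)).mul hG2T).congr (fun x => rfl) (fun x => by ring)
  have part2 : (fun h : ℝ =>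
        p (t₀ + h / 2) - p (t₀ - h / 2)
          + h / 2 * (Hq H (q t₀, p (t₀ + h / 2)) + Hq H (q t₀, p (t₀ - h / 2))))
      =O[𝓝 (0 : ℝ)] fun h : ℝ => h ^ 3 := by
    have key2 : (fun h : ℝ =>
        p (t₀ + h / 2) - p (t₀ - h / 2)
          + h / 2 * (Hq H (q t₀, p (t₀ + h / 2)) + Hq H (q t₀, p (t₀ - h / 2))))
      = fun h : ℝ => ((p (t₀+h/2) - p (t₀-h/2)) - (p (t₀+0/2) - p (t₀-0/2))
          - (-a (t₀+0/2) * (1/2) - -a (t₀-0/2) * (-(1/2))) * h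
          - (-(a' (t₀+0/2) * (1/2)) * (1/2) - -(a' (t₀-0/2) * (-(1/2))) * (-(1/2))) * h^2/2)
          + (1/2) * (h * (G2 h - G2 0 - G2' 0 * h)) := by
      funext h
      rw [vG2, vG2']
      simp only [hG2_def, zero_div, add_zero, sub_zero, ha_def]
      ring
    rw [key2]
    exact hB.add (hmul2.const_mul_left (1/2))
  exact ⟨part1, part2⟩
end
end
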